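/- Fix λ ∈ ℝ^n. Let G = G^1 ⊗ … ⊗ G^n and F = F^1 ⊗ … ⊗ F^n be product probability distributions on [0, x̄]^n with continuous marginal CDFs, and suppose sup_x |F^i(x) − G^i(x)| ≤ Δ for every i. Then Σ_j ( p_j(F, λ) − p_j(G, λ) )^+ = Σ_j ( p_j(G, λ) − p_j(F, λ) )^+ ≤ n Δ, where (a)^+ = max(a, 0). -/

import Mathlib

open MeasureTheory ProbabilityTheory Real

noncomputable section

/-- CDF of a measure on `ℝ`. -/
def mcdf (μ : Measure ℝ) (x : ℝ) : ℝ := (μ (Set.Iic x)).toReal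

/-- The Laguerre cell `L_i(λ) = {x ∈ [0,x̄]^n : x_i + λ_i > x_j + λ_j ∀ j ≠ i}`. -/
def laguerre {n : ℕ} (xbar : ℝ) (lam : Fin n → ℝ) (i : Fin n) : Set (Fin n → ℝ) :=
  {x | (∀ j, x j ∈ Set.Icc (0 : ℝ) xbar) ∧ ∀ j, j ≠ i → x j + lam j < x i + lam i}

/-- `p_j(𝐅, λ) = P_{X∼𝐅}(X ∈ L_j(λ))`. -/
def pAlloc {n : ℕ} (xbar : ℝ) (μ : Measure (Fin n → ℝ)) (lam : Fin n → ℝ) (j : Fin n) : ℝ :=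
  (μ (laguerre xbar lam j)).toReal

open Set

namespace AllocAux

variable {ρ : Measure ℝ} [IsProbabilityMeasure ρ]

lemma mcdf_eq_cdf (ρ : Measure ℝ) [IsProbabilityMeasure ρ] : mcdf ρ = fun x => cdf ρ x := by
  funext x; rw [mcdf, cdf_eq_real]; rfl

lemma atom_null (hc : Continuous (mcdf ρ)) (a : ℝ) : ρ {a} = 0 := by
  have hc' : Continuous (cdf ρ) := by
    have := hc; rwa [mcdf_eq_cdf] at this
  have hm : Monotone (cdf ρ) := monotone_cdf ρ
  have hL : Function.leftLim (cdf ρ) a = cdf ρ a :=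
    hm.continuousWithinAt_Iio_iff_leftLim_eq.1 hc'.continuousWithinAt
  have hρ : ρ = (cdf ρ).measure := (measure_cdf (μ := ρ)).symm
  rw [hρ, StieltjesFunction.measure_singleton, hL, sub_self, ENNReal.ofReal_zero]

lemma meas_inter_supp {xbar : ℝ} (hs : ρ (Icc 0 xbar) = 1) (A : Set ℝ) :
    ρ (Icc 0 xbar ∩ A) = ρ A := by
  have hcompl : ρ (Icc (0:ℝ) xbar)ᶜ = 0 := by
    rw [measure_compl measurableSet_Icc (measure_ne_top _ _), hs, measure_univ, tsub_self]
  refine le_antisymm (measure_mono inter_subset_right) ?_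
  calc ρ A ≤ ρ ((Icc 0 xbar ∩ A) ∪ (Icc 0 xbar)ᶜ) := by
        refine measure_mono fun x hx => ?_
        by_cases h : x ∈ Icc (0:ℝ) xbar
        · exact Or.inl ⟨h, hx⟩
        · exact Or.inr h
    _ ≤ ρ (Icc 0 xbar ∩ A) + ρ (Icc 0 xbar)ᶜ := measure_union_le _ _
    _ = ρ (Icc 0 xbar ∩ A) := by rw [hcompl, add_zero]

lemma toReal_Ioi (t : ℝ) : (ρ (Ioi t)).toReal = 1 - mcdf ρ t := by
  rw [← compl_Iic, measure_compl measurableSet_Iic (measure_ne_top _ _), measure_univ,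
    ENNReal.toReal_sub_of_le prob_le_one ENNReal.one_ne_top, ENNReal.toReal_one]
  rfl

lemma toReal_Iio (hc : Continuous (mcdf ρ)) (t : ℝ) : (ρ (Iio t)).toReal = mcdf ρ t := by
  have h : ρ (Iio t) = ρ (Iic t) := by
    refine le_antisymm (measure_mono Iio_subset_Iic_self) ?_
    calc ρ (Iic t) ≤ ρ (Iio t ∪ {t}) := by
          refine measure_mono fun x hx => ?_
          rcases lt_or_eq_of_le (mem_Iic.1 hx) with h | h
          · exact Or.inl h
          · exact Or.inr h
      _ ≤ ρ (Iio t) + ρ {t} := measure_union_le _ _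
      _ = ρ (Iio t) := by rw [atom_null hc, add_zero]
  rw [h]; rfl

lemma toReal_Icc_inter_Ioi {xbar : ℝ} (hs : ρ (Icc 0 xbar) = 1) (t : ℝ) :
    (ρ (Icc 0 xbar ∩ Ioi t)).toReal = 1 - mcdf ρ t := by
  rw [meas_inter_supp hs, toReal_Ioi]

lemma toReal_Icc_inter_Iio {xbar : ℝ} (hs : ρ (Icc 0 xbar) = 1)
    (hc : Continuous (mcdf ρ)) (t : ℝ) :
    (ρ (Icc 0 xbar ∩ Iio t)).toReal = mcdf ρ t := by
  rw [meas_inter_supp hs, toReal_Iio hc]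

lemma measurableSet_laguerre {n : ℕ} (xbar : ℝ) (lam : Fin n → ℝ) (i : Fin n) :
    MeasurableSet (laguerre xbar lam i) := by
  have h : laguerre xbar lam i =
      (⋂ j, {x : Fin n → ℝ | x j ∈ Icc (0:ℝ) xbar}) ∩
        ⋂ j, ⋂ (_ : j ≠ i), {x : Fin n → ℝ | x j + lam j < x i + lam i} := by
    ext x; simp [laguerre]
  rw [h]
  refine MeasurableSet.inter (MeasurableSet.iInter fun j => ?_)
    (MeasurableSet.iInter fun j => MeasurableSet.iInter fun _ => ?_)
  · exact (measurable_pi_apply j) measurableSet_Icc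
  · exact measurableSet_lt ((measurable_pi_apply j).add_const _)
      ((measurable_pi_apply i).add_const _)

lemma pi_apply_eq {m : ℕ} (μ : Fin (m+1) → Measure ℝ) [∀ i, IsProbabilityMeasure (μ i)]
    (k : Fin (m+1)) {E : Set (Fin (m+1) → ℝ)} (hE : MeasurableSet E) :
    Measure.pi μ E = ∫⁻ y, μ k {a | k.insertNth a y ∈ E}
      ∂(Measure.pi fun j0 => μ (k.succAbove j0)) := by
  set e := MeasurableEquiv.piFinSuccAbove (fun _ : Fin (m+1) => ℝ) k with he
  have hmp := measurePreserving_piFinSuccAbove μ k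
  have hs : MeasurableSet (e.symm ⁻¹' E) := e.symm.measurable hE
  have h0 : e ⁻¹' (e.symm ⁻¹' E) = E := by ext x; simp
  have h1 := hmp.measure_preimage hs.nullMeasurableSet
  rw [h0] at h1
  rw [h1, Measure.prod_apply_symm hs]
  rfl

lemma measurable_section_measure {m : ℕ} (ρ : Measure ℝ) [SFinite ρ]
    {E : Set (Fin (m+1) → ℝ)} (hE : MeasurableSet E) (k : Fin (m+1)) :
    Measurable fun y : Fin m → ℝ => ρ {a | k.insertNth a y ∈ E} := by
  have hE' : MeasurableSet
      ((MeasurableEquiv.piFinSuccAbove (fun _ : Fin (m+1) => ℝ) k).symm ⁻¹' E) :=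
    (MeasurableEquiv.piFinSuccAbove _ k).symm.measurable hE
  exact measurable_measure_prodMk_right (μ := ρ) hE'

lemma mem_laguerre_insert_same {m : ℕ} (xbar : ℝ) (lam : Fin (m+1) → ℝ) (k : Fin (m+1))
    (a : ℝ) (y : Fin m → ℝ) :
    k.insertNth a y ∈ laguerre xbar lam k ↔
      (a ∈ Icc (0:ℝ) xbar ∧ ∀ j0, y j0 ∈ Icc (0:ℝ) xbar) ∧
        ∀ j0, y j0 + lam (k.succAbove j0) < a + lam k := by
  constructor
  · rintro ⟨h1, h2⟩
    refine ⟨⟨?_, fun j0 => ?_⟩, fun j0 => ?_⟩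
    · simpa using h1 k
    · simpa using h1 (k.succAbove j0)
    · have := h2 (k.succAbove j0) (Fin.succAbove_ne k j0)
      simpa using this
  · rintro ⟨⟨ha, hy⟩, hlt⟩
    refine ⟨fun j => ?_, fun j hj => ?_⟩
    · rcases eq_or_ne j k with rfl | hne
      · simpa using ha
      · obtain ⟨j0, rfl⟩ := Fin.exists_succAbove_eq hne
        simpa using hy j0
    · obtain ⟨j0, rfl⟩ := Fin.exists_succAbove_eq hj
      simpa using hlt j0

lemma mem_laguerre_insert_other {m : ℕ} (xbar : ℝ) (lam : Fin (m+1) → ℝ) (k : Fin (m+1))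
    (j0 : Fin m) (a : ℝ) (y : Fin m → ℝ) :
    k.insertNth a y ∈ laguerre xbar lam (k.succAbove j0) ↔
      (a ∈ Icc (0:ℝ) xbar ∧ ∀ i0, y i0 ∈ Icc (0:ℝ) xbar) ∧
        (a + lam k < y j0 + lam (k.succAbove j0) ∧
          ∀ i0, i0 ≠ j0 → y i0 + lam (k.succAbove i0) < y j0 + lam (k.succAbove j0)) := by
  constructor
  · rintro ⟨h1, h2⟩
    refine ⟨⟨by simpa using h1 k, fun i0 => by simpa using h1 (k.succAbove i0)⟩, ?_, ?_⟩
    · have := h2 k (Fin.succAbove_ne k j0).symm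
      simpa using this
    · intro i0 hi0
      have hne : k.succAbove i0 ≠ k.succAbove j0 := fun hc =>
        hi0 (Fin.succAbove_right_injective hc)
      have := h2 (k.succAbove i0) hne
      simpa using this
  · rintro ⟨⟨ha, hy⟩, hk, hw⟩
    refine ⟨fun j => ?_, fun j hj => ?_⟩
    · rcases eq_or_ne j k with rfl | hne
      · simpa using ha
      · obtain ⟨i0, rfl⟩ := Fin.exists_succAbove_eq hne
        simpa using hy i0
    · rcases eq_or_ne j k with rfl | hne
      · simpa using hk
      · obtain ⟨i0, rfl⟩ := Fin.exists_succAbove_eq hne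
        have hi0 : i0 ≠ j0 := fun hc => hj (by rw [hc])
        simpa using hw i0 hi0

lemma max_add_max_neg (d : ℝ) : max (-d) 0 + max d 0 = |d| := by
  rcases le_total 0 d with h | h
  · rw [max_eq_right (neg_nonpos.2 h), max_eq_left h, zero_add, abs_of_nonneg h]
  · rw [max_eq_left (neg_nonneg.2 h), max_eq_right h, add_zero, abs_of_nonpos h]

/-- Pointwise section bound. -/
lemma section_sum_bound {m : ℕ} (xbar Δ : ℝ) (hΔ : 0 ≤ Δ) (lam : Fin (m+2) → ℝ)
    (ρμ ρν : Measure ℝ) [IsProbabilityMeasure ρμ] [IsProbabilityMeasure ρν]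
    (hμs : ρμ (Icc 0 xbar) = 1) (hνs : ρν (Icc 0 xbar) = 1)
    (hμc : Continuous (mcdf ρμ)) (hνc : Continuous (mcdf ρν))
    (hcl : ∀ x, |mcdf ρν x - mcdf ρμ x| ≤ Δ)
    (k : Fin (m+2)) (y : Fin (m+1) → ℝ) :
    ∑ j, max ((ρν {a | k.insertNth a y ∈ laguerre xbar lam j}).toReal -
        (ρμ {a | k.insertNth a y ∈ laguerre xbar lam j}).toReal) 0 ≤ Δ := by
  classical
  by_cases hy : ∀ i0, y i0 ∈ Icc (0:ℝ) xbar
  · set T : ℝ := Finset.univ.sup' Finset.univ_nonempty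
      (fun i0 => y i0 + lam (k.succAbove i0)) with hT
    set t : ℝ := T - lam k with ht
    set d : ℝ := mcdf ρν t - mcdf ρμ t with hd
    have hSk : {a | k.insertNth a y ∈ laguerre xbar lam k} = Icc 0 xbar ∩ Ioi t := by
      ext a
      rw [mem_setOf_eq, mem_laguerre_insert_same]
      constructor
      · rintro ⟨⟨ha, -⟩, h2⟩
        refine ⟨ha, ?_⟩
        rw [mem_Ioi, ht, hT, sub_lt_iff_lt_add]
        exact (Finset.sup'_lt_iff _).2 fun i0 _ => h2 i0
      · rintro ⟨ha, hta⟩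
        rw [mem_Ioi, ht, hT, sub_lt_iff_lt_add] at hta
        exact ⟨⟨ha, hy⟩, fun i0 =>
          (Finset.sup'_lt_iff _).1 hta _ (Finset.mem_univ _)⟩
    have h1 : (ρν {a | k.insertNth a y ∈ laguerre xbar lam k}).toReal -
        (ρμ {a | k.insertNth a y ∈ laguerre xbar lam k}).toReal = -d := by
      rw [hSk, toReal_Icc_inter_Ioi hνs, toReal_Icc_inter_Ioi hμs, hd]; ring
    have h2 : ∀ i0 : Fin (m+1),
        max ((ρν {a | k.insertNth a y ∈ laguerre xbar lam (k.succAbove i0)}).toReal -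
          (ρμ {a | k.insertNth a y ∈ laguerre xbar lam (k.succAbove i0)}).toReal) 0 ≤
        (if (∀ i1, i1 ≠ i0 → y i1 + lam (k.succAbove i1) < y i0 + lam (k.succAbove i0))
          then max d 0 else 0) := by
      intro i0
      by_cases hw : ∀ i1, i1 ≠ i0 → y i1 + lam (k.succAbove i1) < y i0 + lam (k.succAbove i0)
      · rw [if_pos hw]
        have hTeq : y i0 + lam (k.succAbove i0) = T := by
          rw [hT]
          refine le_antisymm (Finset.le_sup' (fun i1 => y i1 + lam (k.succAbove i1))
            (Finset.mem_univ i0)) ?_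
          refine Finset.sup'_le _ _ fun i1 _ => ?_
          rcases eq_or_ne i1 i0 with rfl | h
          · exact le_rfl
          · exact (hw i1 h).le
        have hS : {a | k.insertNth a y ∈ laguerre xbar lam (k.succAbove i0)} =
            Icc 0 xbar ∩ Iio t := by
          ext a
          rw [mem_setOf_eq, mem_laguerre_insert_other]
          constructor
          · rintro ⟨⟨ha, -⟩, hk2, -⟩
            exact ⟨ha, by rw [ht, ← hTeq]; exact lt_sub_iff_add_lt.2 hk2⟩
          · rintro ⟨ha, hta⟩
            refine ⟨⟨ha, hy⟩, ?_, hw⟩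
            rw [hTeq]
            exact lt_sub_iff_add_lt.1 (by rwa [← ht])
        rw [hS, toReal_Icc_inter_Iio hνs hνc, toReal_Icc_inter_Iio hμs hμc, ← hd]
      · rw [if_neg hw]
        have hS : {a | k.insertNth a y ∈ laguerre xbar lam (k.succAbove i0)} = ∅ := by
          ext a
          simp only [mem_setOf_eq, mem_empty_iff_false, iff_false]
          rw [mem_laguerre_insert_other]
          rintro ⟨-, -, hww⟩
          exact hw hww
        rw [hS]
        simp
    rw [Fin.sum_univ_succAbove _ k]
    calc max ((ρν {a | k.insertNth a y ∈ laguerre xbar lam k}).toReal -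
            (ρμ {a | k.insertNth a y ∈ laguerre xbar lam k}).toReal) 0 +
          ∑ i0, max ((ρν {a | k.insertNth a y ∈ laguerre xbar lam (k.succAbove i0)}).toReal -
            (ρμ {a | k.insertNth a y ∈ laguerre xbar lam (k.succAbove i0)}).toReal) 0
        ≤ max (-d) 0 + ∑ i0, (if (∀ i1, i1 ≠ i0 →
            y i1 + lam (k.succAbove i1) < y i0 + lam (k.succAbove i0)) then max d 0 else 0) := by
          refine add_le_add (by rw [h1]) (Finset.sum_le_sum fun i0 _ => h2 i0)
      _ ≤ max (-d) 0 + max d 0 := by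
          refine add_le_add_right ?_ _
          by_cases hex : ∃ i0 : Fin (m+1), ∀ i1, i1 ≠ i0 →
              y i1 + lam (k.succAbove i1) < y i0 + lam (k.succAbove i0)
          · obtain ⟨w, hw⟩ := hex
            rw [Finset.sum_eq_single w]
            · rw [if_pos hw]
            · intro i0 _ hne
              rw [if_neg]
              intro hcon
              exact absurd (hw i0 hne) (lt_asymm (hcon w (Ne.symm hne)))
            · intro h; exact absurd (Finset.mem_univ w) h
          · push_neg at hex
            rw [Finset.sum_eq_zero fun i0 _ => ?_]
            · exact le_max_right _ _
            · rw [if_neg]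
              intro hcon
              obtain ⟨i1, hi1, hge⟩ := hex i0
              exact absurd (hcon i1 hi1) (not_lt.2 hge)
      _ = |d| := max_add_max_neg d
      _ ≤ Δ := hcl t
  · push_neg at hy
    obtain ⟨i0, hi0⟩ := hy
    have hS : ∀ j, {a | k.insertNth a y ∈ laguerre xbar lam j} = ∅ := by
      intro j
      ext a
      simp only [mem_setOf_eq, mem_empty_iff_false, iff_false]
      intro hmem
      exact hi0 (by simpa using hmem.1 (k.succAbove i0))
    simp [hS, hΔ]

/-- The one-coordinate-swap bound, for `n = m+2`. -/
lemma swap_bound {m : ℕ} (xbar Δ : ℝ) (hΔ : 0 ≤ Δ) (lam : Fin (m+2) → ℝ)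
    (μ ν : Fin (m+2) → Measure ℝ)
    [∀ j, IsProbabilityMeasure (μ j)] [∀ j, IsProbabilityMeasure (ν j)]
    (k : Fin (m+2)) (heq : ∀ j, j ≠ k → μ j = ν j)
    (hμs : μ k (Icc (0:ℝ) xbar) = 1) (hνs : ν k (Icc (0:ℝ) xbar) = 1)
    (hμc : Continuous (mcdf (μ k))) (hνc : Continuous (mcdf (ν k)))
    (hcl : ∀ x, |mcdf (ν k) x - mcdf (μ k) x| ≤ Δ) :
    ∑ j, max (pAlloc xbar (Measure.pi ν) lam j - pAlloc xbar (Measure.pi μ) lam j) 0 ≤ Δ := by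
  classical
  set P : Measure (Fin (m+1) → ℝ) := Measure.pi fun j0 => μ (k.succAbove j0) with hP
  have hPν : (Measure.pi fun j0 => ν (k.succAbove j0)) = P := by
    rw [hP]; congr 1; funext j0; exact (heq _ (Fin.succAbove_ne k j0)).symm
  have hpiμ : ∀ j, Measure.pi μ (laguerre xbar lam j) =
      ∫⁻ y, μ k {a | k.insertNth a y ∈ laguerre xbar lam j} ∂P :=
    fun j => pi_apply_eq μ k (measurableSet_laguerre _ _ _)
  have hpiν : ∀ j, Measure.pi ν (laguerre xbar lam j) =
      ∫⁻ y, ν k {a | k.insertNth a y ∈ laguerre xbar lam j} ∂P := by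
    intro j
    rw [pi_apply_eq ν k (measurableSet_laguerre _ _ _), hPν]
  have hmf : ∀ j, Measurable fun y : Fin (m+1) → ℝ =>
      (ν k {a | k.insertNth a y ∈ laguerre xbar lam j}).toReal :=
    fun j => (measurable_section_measure (ν k) (measurableSet_laguerre _ _ _) k).ennreal_toReal
  have hmg : ∀ j, Measurable fun y : Fin (m+1) → ℝ =>
      (μ k {a | k.insertNth a y ∈ laguerre xbar lam j}).toReal :=
    fun j => (measurable_section_measure (μ k) (measurableSet_laguerre _ _ _) k).ennreal_toReal
  have hbound : ∀ (ρ : Measure ℝ) (_ : IsProbabilityMeasure ρ) (s : Set ℝ),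
      ‖(ρ s).toReal‖ ≤ 1 := by
    intro ρ hρ s
    rw [Real.norm_eq_abs, abs_of_nonneg ENNReal.toReal_nonneg]
    calc (ρ s).toReal ≤ (ρ univ).toReal :=
          ENNReal.toReal_mono (measure_ne_top _ _) (measure_mono (subset_univ _))
      _ = 1 := by simp
  have hfi : ∀ j, Integrable (fun y => (ν k {a | k.insertNth a y ∈ laguerre xbar lam j}).toReal) P :=
    fun j => (integrable_const (1:ℝ)).mono' (hmf j).aestronglyMeasurable
      (Filter.Eventually.of_forall fun y => hbound _ inferInstance _)
  have hgi : ∀ j, Integrable (fun y => (μ k {a | k.insertNth a y ∈ laguerre xbar lam j}).toReal) P :=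
    fun j => (integrable_const (1:ℝ)).mono' (hmg j).aestronglyMeasurable
      (Filter.Eventually.of_forall fun y => hbound _ inferInstance _)
  have hdiff : ∀ j, pAlloc xbar (Measure.pi ν) lam j - pAlloc xbar (Measure.pi μ) lam j =
      ∫ y, ((ν k {a | k.insertNth a y ∈ laguerre xbar lam j}).toReal -
        (μ k {a | k.insertNth a y ∈ laguerre xbar lam j}).toReal) ∂P := by
    intro j
    rw [integral_sub (hfi j) (hgi j)]
    unfold pAlloc
    rw [hpiν j, hpiμ j,
      ← integral_toReal ((measurable_section_measure (ν k) (measurableSet_laguerre _ _ _) k).aemeasurable)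
        (Filter.Eventually.of_forall fun y => lt_of_le_of_lt prob_le_one ENNReal.one_lt_top),
      ← integral_toReal ((measurable_section_measure (μ k) (measurableSet_laguerre _ _ _) k).aemeasurable)
        (Filter.Eventually.of_forall fun y => lt_of_le_of_lt prob_le_one ENNReal.one_lt_top)]
  calc ∑ j, max (pAlloc xbar (Measure.pi ν) lam j - pAlloc xbar (Measure.pi μ) lam j) 0
      = ∑ j, max (∫ y, ((ν k {a | k.insertNth a y ∈ laguerre xbar lam j}).toReal -
          (μ k {a | k.insertNth a y ∈ laguerre xbar lam j}).toReal) ∂P) 0 := by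
        refine Finset.sum_congr rfl fun j _ => ?_
        rw [hdiff j]
    _ ≤ ∑ j, ∫ y, max ((ν k {a | k.insertNth a y ∈ laguerre xbar lam j}).toReal -
          (μ k {a | k.insertNth a y ∈ laguerre xbar lam j}).toReal) 0 ∂P := by
        refine Finset.sum_le_sum fun j _ => ?_
        refine max_le (integral_mono ((hfi j).sub (hgi j)) ((hfi j).sub (hgi j)).pos_part
          fun y => le_max_left _ _) (integral_nonneg fun y => le_max_right _ _)
    _ = ∫ y, ∑ j, max ((ν k {a | k.insertNth a y ∈ laguerre xbar lam j}).toReal -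
          (μ k {a | k.insertNth a y ∈ laguerre xbar lam j}).toReal) 0 ∂P :=
        (integral_finset_sum _ fun j _ => ((hfi j).sub (hgi j)).pos_part).symm
    _ ≤ ∫ _, Δ ∂P := by
        refine integral_mono (integrable_finset_sum _ fun j _ => ((hfi j).sub (hgi j)).pos_part)
          (integrable_const Δ) fun y => ?_
        exact section_sum_bound xbar Δ hΔ lam (μ k) (ν k) hμs hνs hμc hνc hcl k y
    _ = Δ := by simp

/-- Sum of cell probabilities is 1. -/
lemma sum_pAlloc_eq_one {m : ℕ} (xbar : ℝ) (lam : Fin (m+1) → ℝ)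
    (μ : Fin (m+1) → Measure ℝ) [∀ j, IsProbabilityMeasure (μ j)]
    (hsupp : ∀ j, μ j (Icc (0:ℝ) xbar) = 1)
    (hcont : ∀ j, Continuous (mcdf (μ j))) :
    ∑ j, pAlloc xbar (Measure.pi μ) lam j = 1 := by
  classical
  have hties : ∀ i j : Fin (m+1), i ≠ j →
      Measure.pi μ {x | x i + lam i = x j + lam j} = 0 := by
    intro i j hij
    have hmeasD : MeasurableSet {x : Fin (m+1) → ℝ | x i + lam i = x j + lam j} :=
      measurableSet_eq_fun ((measurable_pi_apply i).add_const _)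
        ((measurable_pi_apply j).add_const _)
    rw [pi_apply_eq μ i hmeasD]
    have hz : ∀ y : Fin m → ℝ,
        μ i {a | i.insertNth a y ∈ {x : Fin (m+1) → ℝ | x i + lam i = x j + lam j}} = 0 := by
      intro y
      obtain ⟨j0, rfl⟩ := Fin.exists_succAbove_eq hij.symm
      have hsing : {a : ℝ | i.insertNth a y ∈
          {x : Fin (m+1) → ℝ | x i + lam i = x (i.succAbove j0) + lam (i.succAbove j0)}} =
          {y j0 + lam (i.succAbove j0) - lam i} := by
        ext a
        simp only [mem_setOf_eq, Fin.insertNth_apply_same, Fin.insertNth_apply_succAbove,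
          mem_singleton_iff]
        constructor <;> intro h <;> linarith
      rw [hsing]
      exact atom_null (hcont i) _
    simp only [hz, lintegral_zero]
  have hdisj : Pairwise (Function.onFun Disjoint fun j => laguerre xbar lam j) := by
    intro i j hij
    rw [Function.onFun, Set.disjoint_left]
    rintro x ⟨-, hxi⟩ ⟨-, hxj⟩
    exact absurd (hxi j hij.symm) (lt_asymm (hxj i hij))
  have hcube : Measure.pi μ (Set.pi univ fun _ => Icc (0:ℝ) xbar) = 1 := by
    rw [Measure.pi_pi]
    simp [hsupp]
  have hsubset : (Set.pi univ fun _ : Fin (m+1) => Icc (0:ℝ) xbar) ⊆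
      (⋃ j, laguerre xbar lam j) ∪
        ⋃ p : Fin (m+1) × Fin (m+1), ⋃ (_ : p.1 ≠ p.2),
          {x | x p.1 + lam p.1 = x p.2 + lam p.2} := by
    intro x hx
    obtain ⟨i, -, hi⟩ := Finset.exists_max_image Finset.univ (fun j => x j + lam j)
      Finset.univ_nonempty
    by_cases hstrict : ∀ j, j ≠ i → x j + lam j < x i + lam i
    · exact Or.inl (mem_iUnion.2 ⟨i, ⟨fun j => hx j (Set.mem_univ j), hstrict⟩⟩)
    · push_neg at hstrict
      obtain ⟨j, hji, hge⟩ := hstrict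
      refine Or.inr (mem_iUnion.2 ⟨(j, i), mem_iUnion.2 ⟨hji, ?_⟩⟩)
      exact le_antisymm (hi j (Finset.mem_univ j)) hge
  have hties_union : Measure.pi μ
      (⋃ p : Fin (m+1) × Fin (m+1), ⋃ (_ : p.1 ≠ p.2),
        {x | x p.1 + lam p.1 = x p.2 + lam p.2}) = 0 := by
    refine measure_iUnion_null fun p => ?_
    rcases eq_or_ne p.1 p.2 with h | h
    · simp [h]
    · exact measure_mono_null (Set.iUnion_subset fun _ => subset_rfl) (hties p.1 p.2 h)
  have hunion : Measure.pi μ (⋃ j, laguerre xbar lam j) = 1 := by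
    refine le_antisymm prob_le_one ?_
    calc (1:ENNReal) = Measure.pi μ (Set.pi univ fun _ => Icc (0:ℝ) xbar) := hcube.symm
      _ ≤ Measure.pi μ ((⋃ j, laguerre xbar lam j) ∪
          ⋃ p : Fin (m+1) × Fin (m+1), ⋃ (_ : p.1 ≠ p.2),
            {x | x p.1 + lam p.1 = x p.2 + lam p.2}) := measure_mono hsubset
      _ ≤ Measure.pi μ (⋃ j, laguerre xbar lam j) +
          Measure.pi μ (⋃ p : Fin (m+1) × Fin (m+1), ⋃ (_ : p.1 ≠ p.2),
            {x | x p.1 + lam p.1 = x p.2 + lam p.2}) := measure_union_le _ _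
      _ = Measure.pi μ (⋃ j, laguerre xbar lam j) := by rw [hties_union, add_zero]
  rw [measure_iUnion hdisj (fun j => measurableSet_laguerre _ _ _), tsum_fintype] at hunion
  have h1 : ∑ j, pAlloc xbar (Measure.pi μ) lam j =
      (∑ j, Measure.pi μ (laguerre xbar lam j)).toReal := by
    rw [ENNReal.toReal_sum fun j _ => measure_ne_top _ _]
    rfl
  rw [h1, hunion, ENNReal.toReal_one]

/-- One-coordinate swap, all `n = m+1`. -/
lemma swap_bound_all {m : ℕ} (xbar Δ : ℝ) (hΔ : 0 ≤ Δ) (lam : Fin (m+1) → ℝ)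
    (μ ν : Fin (m+1) → Measure ℝ)
    [hμp : ∀ j, IsProbabilityMeasure (μ j)] [hνp : ∀ j, IsProbabilityMeasure (ν j)]
    (k : Fin (m+1)) (heq : ∀ j, j ≠ k → μ j = ν j)
    (hμs : ∀ j, μ j (Icc (0:ℝ) xbar) = 1) (hνs : ∀ j, ν j (Icc (0:ℝ) xbar) = 1)
    (hμc : ∀ j, Continuous (mcdf (μ j))) (hνc : ∀ j, Continuous (mcdf (ν j)))
    (hcl : ∀ x, |mcdf (ν k) x - mcdf (μ k) x| ≤ Δ) :
    ∑ j, max (pAlloc xbar (Measure.pi ν) lam j - pAlloc xbar (Measure.pi μ) lam j) 0 ≤ Δ := by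
  cases m with
  | zero =>
    have e1 := sum_pAlloc_eq_one xbar lam ν hνs hνc
    have e2 := sum_pAlloc_eq_one xbar lam μ hμs hμc
    rw [Fin.sum_univ_one] at e1 e2 ⊢
    rw [e1, e2, sub_self]
    simpa using hΔ
  | succ m' =>
    exact swap_bound xbar Δ hΔ lam μ ν k heq (hμs k) (hνs k) (hμc k) (hνc k) hcl

end AllocAux

open AllocAux

theorem allocation_size_closeness
    {n : ℕ} (xbar Δ : ℝ) (hxbar : 0 < xbar)
    (lam : Fin n → ℝ)
    (Fm Gm : Fin n → Measure ℝ)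
    [∀ j, IsProbabilityMeasure (Fm j)] [∀ j, IsProbabilityMeasure (Gm j)]
    (hFsupp : ∀ j, Fm j (Set.Icc (0 : ℝ) xbar) = 1)
    (hGsupp : ∀ j, Gm j (Set.Icc (0 : ℝ) xbar) = 1)
    (hFcont : ∀ j, Continuous (mcdf (Fm j)))
    (hGcont : ∀ j, Continuous (mcdf (Gm j)))
    (hclose : ∀ j x, |mcdf (Fm j) x - mcdf (Gm j) x| ≤ Δ) :
    (∑ j, max (pAlloc xbar (Measure.pi Fm) lam j - pAlloc xbar (Measure.pi Gm) lam j) 0 =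
        ∑ j, max (pAlloc xbar (Measure.pi Gm) lam j - pAlloc xbar (Measure.pi Fm) lam j) 0) ∧
      ∑ j, max (pAlloc xbar (Measure.pi Fm) lam j - pAlloc xbar (Measure.pi Gm) lam j) 0 ≤
        n * Δ := by
  classical
  cases n with
  | zero => simp
  | succ m =>
  have hΔ0 : 0 ≤ Δ := le_trans (abs_nonneg _) (hclose 0 0)
  have hsumF : ∑ j, pAlloc xbar (Measure.pi Fm) lam j = 1 :=
    sum_pAlloc_eq_one xbar lam Fm hFsupp hFcont
  have hsumG : ∑ j, pAlloc xbar (Measure.pi Gm) lam j = 1 :=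
    sum_pAlloc_eq_one xbar lam Gm hGsupp hGcont
  constructor
  · have h1 : ∀ a b : ℝ, max (a - b) 0 - max (b - a) 0 = a - b := by
      intro a b
      rcases le_total a b with h | h
      · rw [max_eq_right (sub_nonpos.2 h), max_eq_left (sub_nonneg.2 h)]; ring
      · rw [max_eq_left (sub_nonneg.2 h), max_eq_right (sub_nonpos.2 h)]; ring
    have h2 : ∑ j, (max (pAlloc xbar (Measure.pi Fm) lam j - pAlloc xbar (Measure.pi Gm) lam j) 0
        - max (pAlloc xbar (Measure.pi Gm) lam j - pAlloc xbar (Measure.pi Fm) lam j) 0) = 0 := by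
      simp_rw [h1]
      rw [Finset.sum_sub_distrib, hsumF, hsumG, sub_self]
    rw [Finset.sum_sub_distrib] at h2
    linarith
  · set H : ℕ → (Fin (m+1) → Measure ℝ) := fun N i => if (i:ℕ) < N then Fm i else Gm i with hH
    haveI hHp : ∀ (N : ℕ) (i : Fin (m+1)), IsProbabilityMeasure (H N i) := by
      intro N i
      rw [hH]
      dsimp only
      split <;> infer_instance
    have hHsupp : ∀ (N : ℕ) (i : Fin (m+1)), H N i (Set.Icc (0:ℝ) xbar) = 1 := by
      intro N i
      rw [hH]
      dsimp only
      split
      · exact hFsupp i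
      · exact hGsupp i
    have hHcont : ∀ (N : ℕ) (i : Fin (m+1)), Continuous (mcdf (H N i)) := by
      intro N i
      rw [hH]
      dsimp only
      split
      · exact hFcont i
      · exact hGcont i
    have hH0 : H 0 = Gm := funext fun i => if_neg (Nat.not_lt_zero _)
    have hHtop : H (m+1) = Fm := funext fun i => if_pos i.isLt
    have hstep : ∀ N, N < m + 1 →
        ∑ j, max (pAlloc xbar (Measure.pi (H (N+1))) lam j -
          pAlloc xbar (Measure.pi (H N)) lam j) 0 ≤ Δ := by
      intro N hN
      set k : Fin (m+1) := ⟨N, hN⟩ with hk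
      have hμk : H N k = Gm k := if_neg (lt_irrefl N)
      have hνk : H (N+1) k = Fm k := if_pos (Nat.lt_succ_self N)
      refine swap_bound_all xbar Δ hΔ0 lam (H N) (H (N+1)) k ?_ (hHsupp N) (hHsupp (N+1))
        (hHcont N) (hHcont (N+1)) ?_
      · intro j hj
        rw [hH]
        dsimp only
        have hiff : ((j:ℕ) < N) ↔ ((j:ℕ) < N + 1) := by
          constructor
          · exact fun h => h.trans (Nat.lt_succ_self N)
          · intro h
            refine Nat.lt_of_le_of_ne (Nat.lt_succ_iff.1 h) fun hc => hj (Fin.ext hc)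
        by_cases h : (j:ℕ) < N
        · rw [if_pos h, if_pos (hiff.1 h)]
        · rw [if_neg h, if_neg fun hc => h (hiff.2 hc)]
      · intro x
        rw [hμk, hνk]
        exact hclose k x
    have htel : ∀ j, pAlloc xbar (Measure.pi Fm) lam j - pAlloc xbar (Measure.pi Gm) lam j =
        ∑ N ∈ Finset.range (m+1), (pAlloc xbar (Measure.pi (H (N+1))) lam j -
          pAlloc xbar (Measure.pi (H N)) lam j) := by
      intro j
      rw [Finset.sum_range_sub (fun N => pAlloc xbar (Measure.pi (H N)) lam j), hH0, hHtop]
    calc ∑ j, max (pAlloc xbar (Measure.pi Fm) lam j - pAlloc xbar (Measure.pi Gm) lam j) 0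
        = ∑ j, max (∑ N ∈ Finset.range (m+1), (pAlloc xbar (Measure.pi (H (N+1))) lam j -
            pAlloc xbar (Measure.pi (H N)) lam j)) 0 := by
          refine Finset.sum_congr rfl fun j _ => ?_
          rw [htel j]
      _ ≤ ∑ j, ∑ N ∈ Finset.range (m+1), max (pAlloc xbar (Measure.pi (H (N+1))) lam j -
            pAlloc xbar (Measure.pi (H N)) lam j) 0 := by
          refine Finset.sum_le_sum fun j _ => ?_
          exact max_le (Finset.sum_le_sum fun N _ => le_max_left _ _)
            (Finset.sum_nonneg fun N _ => le_max_right _ _)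
      _ = ∑ N ∈ Finset.range (m+1), ∑ j, max (pAlloc xbar (Measure.pi (H (N+1))) lam j -
            pAlloc xbar (Measure.pi (H N)) lam j) 0 := Finset.sum_comm
      _ ≤ ∑ N ∈ Finset.range (m+1), Δ := by
          refine Finset.sum_le_sum fun N hN => hstep N (Finset.mem_range.1 hN)
      _ = (m+1 : ℕ) * Δ := by
          rw [Finset.sum_const, Finset.card_range, nsmul_eq_mul]
      _ = ((m+1 : ℕ) : ℝ) * Δ := by norm_num
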